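/- In any (5, 3, 1)-feasible distribution vector d = (d(0),…,d(4)) of nonnegative integers, the middle entry d(2) equals 0. Consequently, no PSCA(5, 3, 1) exists, since every symbol would be forbidden from column 2 while column 2 must contain some symbol in each of the 6 permutations. -/

import Mathlib

open scoped Classical

/-- A permutation `π` of `[v]` covers a sequence `s` of `t` distinct symbols if the
symbols appear in `π` in the given order, i.e. `π⁻¹(s 0) < ⋯ < π⁻¹(s (t-1))`. -/
def Covers {v t : ℕ} (π : Equiv.Perm (Fin v)) (s : Fin t → Fin v) : Prop :=
  StrictMono fun i => π.symm (s i)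

/-- `X` is a perfect sequence covering array PSCA(v, t, λ): every sequence of `t`
distinct symbols of `[v]` is covered by exactly `λ` permutations of `X` (with multiplicity). -/
def IsPSCA (v t l : ℕ) (X : Multiset (Equiv.Perm (Fin v))) : Prop :=
  ∀ s : Fin t → Fin v, Function.Injective s → X.countP (fun π => Covers π s) = l

namespace PSCAAux

lemma covers_iff (π : Equiv.Perm (Fin 5)) (s : Fin 3 → Fin 5) :
    Covers π s ↔ π.symm (s 0) < π.symm (s 1) ∧ π.symm (s 1) < π.symm (s 2) := by
  constructor
  · intro h
    exact ⟨h (by decide : (0:Fin 3) < 1), h (by decide : (1:Fin 3) < 2)⟩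
  · rintro ⟨h1, h2⟩ i j hij
    fin_cases i <;> fin_cases j <;>
      first
        | exact h1 | exact h2 | exact h1.trans h2
        | exact absurd hij (by decide)

lemma inj3 (x y z : Fin 5) (hxy : x ≠ y) (hxz : x ≠ z) (hyz : y ≠ z) :
    Function.Injective ![x, y, z] := by
  intro i j h
  fin_cases i <;> fin_cases j <;> simp_all

lemma countP_split (X : Multiset (Equiv.Perm (Fin 5))) (p q : Equiv.Perm (Fin 5) → Prop)
    [DecidablePred p] [DecidablePred (fun x => p x ∧ q x)]
    [DecidablePred (fun x => p x ∧ ¬ q x)] :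
    X.countP p = X.countP (fun x => p x ∧ q x) + X.countP (fun x => p x ∧ ¬ q x) := by
  induction X using Multiset.induction with
  | empty => simp
  | cons a s ih =>
    simp only [Multiset.countP_cons, ih]
    by_cases hp : p a <;> by_cases hq : q a <;> simp [hp, hq] <;> omega

variable {X : Multiset (Equiv.Perm (Fin 5))} (hX : IsPSCA 5 3 1 X)

include hX in
lemma triple_count (x y z : Fin 5) (hxy : x ≠ y) (hxz : x ≠ z) (hyz : y ≠ z) :
    X.countP (fun π => π.symm x < π.symm y ∧ π.symm y < π.symm z) = 1 := by
  have := hX ![x, y, z] (inj3 x y z hxy hxz hyz)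
  rw [← this]
  apply Multiset.countP_congr rfl
  intro π _
  simp [covers_iff]

include hX in
lemma pair_count (a b : Fin 5) (hab : a ≠ b) :
    X.countP (fun π => π.symm b < π.symm a) = 3 := by
  obtain ⟨c, hca, hcb⟩ : ∃ c : Fin 5, c ≠ a ∧ c ≠ b := by revert a b; decide
  rw [countP_split X _ (fun π => π.symm c < π.symm b),
      countP_split X (fun x => _ ∧ ¬ _) (fun π => π.symm c < π.symm a)]
  have e1 : X.countP (fun π => π.symm b < π.symm a ∧ π.symm c < π.symm b)
      = X.countP (fun π => π.symm c < π.symm b ∧ π.symm b < π.symm a) := by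
    apply Multiset.countP_congr rfl; intro π _; simp [and_comm]
  have e2 : X.countP (fun π => (π.symm b < π.symm a ∧ ¬ π.symm c < π.symm b) ∧ π.symm c < π.symm a)
      = X.countP (fun π => π.symm b < π.symm c ∧ π.symm c < π.symm a) := by
    apply Multiset.countP_congr rfl; intro π _
    have hne : π.symm b ≠ π.symm c := fun h => hcb (π.symm.injective h.symm)
    apply propext
    constructor
    · rintro ⟨⟨h1, h2⟩, h3⟩; exact ⟨lt_of_le_of_ne (not_lt.1 h2) hne, h3⟩
    · rintro ⟨h1, h2⟩; exact ⟨⟨h1.trans h2, not_lt.2 h1.le⟩, h2⟩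
  have e3 : X.countP (fun π => (π.symm b < π.symm a ∧ ¬ π.symm c < π.symm b) ∧ ¬ π.symm c < π.symm a)
      = X.countP (fun π => π.symm b < π.symm a ∧ π.symm a < π.symm c) := by
    apply Multiset.countP_congr rfl; intro π _
    have hne : π.symm a ≠ π.symm c := fun h => hca (π.symm.injective h.symm)
    apply propext
    constructor
    · rintro ⟨⟨h1, _⟩, h3⟩; exact ⟨h1, lt_of_le_of_ne (not_lt.1 h3) hne⟩
    · rintro ⟨h1, h2⟩; exact ⟨⟨h1, not_lt.2 (h1.trans h2).le⟩, not_lt.2 h2.le⟩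
  rw [e1, e2, e3,
    triple_count hX c b a hcb hca (Ne.symm hab),
    triple_count hX b c a hcb.symm (Ne.symm hab) hca,
    triple_count hX b a c (Ne.symm hab) hcb.symm hca.symm]

include hX in
lemma pairpair_count (a b c : Fin 5) (hba : b ≠ a) (hca : c ≠ a) (hbc : b ≠ c) :
    X.countP (fun π => π.symm b < π.symm a ∧ π.symm c < π.symm a) = 2 := by
  rw [countP_split X _ (fun π => π.symm b < π.symm c)]
  have e1 : X.countP (fun π => (π.symm b < π.symm a ∧ π.symm c < π.symm a) ∧ π.symm b < π.symm c)
      = X.countP (fun π => π.symm b < π.symm c ∧ π.symm c < π.symm a) := by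
    apply Multiset.countP_congr rfl; intro π _
    apply propext
    constructor
    · rintro ⟨⟨_, h2⟩, h3⟩; exact ⟨h3, h2⟩
    · rintro ⟨h1, h2⟩; exact ⟨⟨h1.trans h2, h2⟩, h1⟩
  have e2 : X.countP (fun π => (π.symm b < π.symm a ∧ π.symm c < π.symm a) ∧ ¬ π.symm b < π.symm c)
      = X.countP (fun π => π.symm c < π.symm b ∧ π.symm b < π.symm a) := by
    apply Multiset.countP_congr rfl; intro π _
    have hne : π.symm c ≠ π.symm b := fun h => hbc (π.symm.injective h.symm)
    apply propext
    constructor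
    · rintro ⟨⟨h1, _⟩, h3⟩; exact ⟨lt_of_le_of_ne (not_lt.1 h3) hne, h1⟩
    · rintro ⟨h1, h2⟩; exact ⟨⟨h2, h1.trans h2⟩, not_lt.2 h1.le⟩
  rw [e1, e2, triple_count hX b c a hbc hba hca, triple_count hX c b a hbc.symm hca hba]

include hX in
lemma pair_count_self (a b : Fin 5) :
    X.countP (fun π => π.symm b < π.symm a) = if b = a then 0 else 3 := by
  split_ifs with h
  · subst h
    rw [Multiset.countP_eq_zero]
    intro π _; exact lt_irrefl _
  · exact pair_count hX a b (Ne.symm h)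

lemma countP_eq_summ (X : Multiset (Equiv.Perm (Fin 5))) (p : Equiv.Perm (Fin 5) → Prop)
    [DecidablePred p] :
    X.countP p = (X.map fun x => if p x then 1 else 0).sum := by
  induction X using Multiset.induction with
  | empty => simp
  | cons a s ih => simp [Multiset.countP_cons, ih]; split_ifs <;> omega

lemma sum_map_summ (X : Multiset (Equiv.Perm (Fin 5))) (g : Fin 5 → Equiv.Perm (Fin 5) → ℕ) :
    (X.map fun x => ∑ b : Fin 5, g b x).sum = ∑ b : Fin 5, (X.map (g b)).sum := by
  induction X using Multiset.induction with
  | empty => simp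
  | cons a s ih => simp [ih, Finset.sum_add_distrib]

lemma map_group (X : Multiset (Equiv.Perm (Fin 5))) (f : Equiv.Perm (Fin 5) → ℕ)
    (hf : ∀ x, f x < 5) (g : ℕ → ℕ) :
    (X.map fun x => g (f x)).sum = ∑ j ∈ Finset.range 5, g j * X.countP (fun x => f x = j) := by
  induction X using Multiset.induction with
  | empty => simp
  | cons a s ih =>
    simp only [Multiset.map_cons, Multiset.sum_cons, ih, Multiset.countP_cons,
      Nat.mul_add]
    rw [Finset.sum_add_distrib]
    have : ∑ j ∈ Finset.range 5, g j * (if f a = j then 1 else 0) = g (f a) := by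
      rw [Finset.sum_eq_single (f a)]
      · simp
      · intro b _ hb; simp [Ne.symm hb]
      · intro h; exact absurd (Finset.mem_range.2 (hf a)) h
    omega

lemma val_eq_sum (π : Equiv.Perm (Fin 5)) (a : Fin 5) :
    ((π.symm a : Fin 5) : ℕ) = ∑ b : Fin 5, if π.symm b < π.symm a then 1 else 0 := by
  rw [Finset.sum_boole]
  have himg : (Finset.univ.filter fun b => π.symm b < π.symm a)
      = (Finset.univ.filter (· < π.symm a)).map ⟨π, π.injective⟩ := by
    ext b
    simp only [Finset.mem_filter, Finset.mem_map, Finset.mem_univ, true_and,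
      Function.Embedding.coeFn_mk]
    constructor
    · intro h; exact ⟨π.symm b, h, by simp⟩
    · rintro ⟨y, hy, rfl⟩; simpa using hy
  rw [himg, Finset.card_map]
  have h5 : ∀ t : Fin 5, (Finset.univ.filter (· < t)).card = t.val := by decide
  simp [h5]

include hX in
lemma sum1 (a : Fin 5) : (X.map fun π => ((π.symm a : Fin 5) : ℕ)).sum = 12 := by
  rw [Multiset.map_congr rfl (fun π _ => val_eq_sum π a), sum_map_summ]
  have : ∀ b : Fin 5, (X.map fun π => if π.symm b < π.symm a then 1 else 0).sum
      = if b = a then 0 else 3 := by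
    intro b
    rw [← countP_eq_summ, pair_count_self hX a b]
  rw [Finset.sum_congr rfl (fun b _ => this b)]
  have goal : ∀ a' : Fin 5, (∑ b : Fin 5, if b = a' then 0 else 3) = 12 := by decide
  exact goal a

include hX in
lemma sum2 (a : Fin 5) : (X.map fun π => ((π.symm a : Fin 5) : ℕ) ^ 2).sum = 36 := by
  have key : ∀ π : Equiv.Perm (Fin 5), ((π.symm a : Fin 5) : ℕ) ^ 2
      = ∑ b : Fin 5, ∑ c : Fin 5,
          if π.symm b < π.symm a ∧ π.symm c < π.symm a then 1 else 0 := by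
    intro π
    rw [sq, val_eq_sum π a, Finset.sum_mul_sum]
    refine Finset.sum_congr rfl fun b _ => Finset.sum_congr rfl fun c _ => ?_
    split_ifs <;> simp_all
  rw [Multiset.map_congr rfl (fun π _ => key π), sum_map_summ]
  have inner : ∀ b : Fin 5, (X.map fun π => ∑ c : Fin 5,
      if π.symm b < π.symm a ∧ π.symm c < π.symm a then 1 else 0).sum
      = ∑ c : Fin 5, (X.map fun π =>
          if π.symm b < π.symm a ∧ π.symm c < π.symm a then 1 else 0).sum :=
    fun b => sum_map_summ X _
  rw [Finset.sum_congr rfl (fun b _ => inner b)]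
  have cnt : ∀ b c : Fin 5, (X.map fun π =>
      if π.symm b < π.symm a ∧ π.symm c < π.symm a then 1 else 0).sum
      = if b = a ∨ c = a then 0 else if b = c then 3 else 2 := by
    intro b c
    rw [← countP_eq_summ]
    by_cases hba : b = a
    · subst hba
      simp only [true_or, if_pos]
      rw [Multiset.countP_eq_zero]
      rintro π _ ⟨h, _⟩; exact lt_irrefl _ h
    · by_cases hca : c = a
      · subst hca
        simp only [or_true, if_pos]
        rw [Multiset.countP_eq_zero]
        rintro π _ ⟨_, h⟩; exact lt_irrefl _ h
      · by_cases hbc : b = c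
        · subst hbc
          rw [if_neg (by simp [hba]), if_pos rfl,
            Multiset.countP_congr rfl (fun π _ => propext and_self_iff),
            pair_count hX a b (Ne.symm hba)]
        · rw [if_neg (by simp [hba, hca]), if_neg hbc]
          exact pairpair_count hX a b c hba hca hbc
  rw [Finset.sum_congr rfl (fun b _ => Finset.sum_congr rfl (fun c _ => cnt b c))]
  have goal : ∀ a' : Fin 5,
      (∑ b : Fin 5, ∑ c : Fin 5, if b = a' ∨ c = a' then 0 else if b = c then 3 else 2) = 36 := by
    decide
  exact goal a

include hX in
lemma d2_zero (a : Fin 5) : X.countP (fun π => ((π.symm a : Fin 5) : ℕ) = 2) = 0 := by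
  set f : Equiv.Perm (Fin 5) → ℕ := fun π => ((π.symm a : Fin 5) : ℕ) with hf
  have hf5 : ∀ x, f x < 5 := fun x => (x.symm a).isLt
  have g1 := map_group X f hf5 (fun j => j)
  have g2 := map_group X f hf5 (fun j => j ^ 2)
  rw [show (fun x => (fun j => j) (f x)) = fun x => f x from rfl, sum1 hX a] at g1
  rw [show (fun x => (fun j => j ^ 2) (f x)) = fun x => f x ^ 2 from rfl, sum2 hX a] at g2
  have := g1.symm
  have := g2.symm
  set D : ℕ → ℕ := fun j => X.countP (fun x => f x = j) with hD
  have e1 : ∑ j ∈ Finset.range 5, j * D j = 12 := g1.symm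
  have e2 : ∑ j ∈ Finset.range 5, j ^ 2 * D j = 36 := g2.symm
  have : D 2 = 0 := by
    simp [Finset.sum_range_succ] at e1 e2
    omega
  exact this

include hX in
lemma no_psca : False := by
  have hsum : ∑ a : Fin 5, X.countP (fun π => ((π.symm a : Fin 5) : ℕ) = 2)
      = Multiset.card X := by
    rw [Finset.sum_congr rfl (fun a _ => countP_eq_summ X _), ← sum_map_summ]
    have one : ∀ π : Equiv.Perm (Fin 5),
        (∑ a : Fin 5, if ((π.symm a : Fin 5) : ℕ) = 2 then 1 else 0) = 1 := by
      intro π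
      rw [Finset.sum_boole]
      have : (Finset.univ.filter fun a => ((π.symm a : Fin 5) : ℕ) = 2) = {π 2} := by
        ext a
        simp only [Finset.mem_filter, Finset.mem_univ, true_and, Finset.mem_singleton]
        rw [show (((π.symm a : Fin 5) : ℕ) = 2) ↔ π.symm a = (2 : Fin 5) from
          by simp [Fin.ext_iff], Equiv.symm_apply_eq]
      rw [this]; simp
    rw [Multiset.map_congr rfl (fun π _ => one π)]
    simp
  rw [Finset.sum_congr rfl (fun a _ => d2_zero hX a)] at hsum
  simp only [Finset.sum_const_zero] at hsum
  have hX0 : X = 0 := Multiset.card_eq_zero.1 hsum.symm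
  have := hX ![0, 1, 2] (by decide)
  rw [hX0] at this
  simp at this

end PSCAAux

/-- Every (5, 3, 1)-feasible distribution has middle entry `d(2) = 0`;
consequently no PSCA(5, 3, 1) exists. -/
theorem stmt12 (d : ℕ → ℕ)
    (h0 : ∑ j ∈ Finset.range 5, d j = 6)
    (h1 : ∑ j ∈ Finset.range 5, j * d j = 12)
    (h2 : ∑ j ∈ Finset.range 5, j ^ 2 * d j = 36)
    (h3 : ∀ j < 3, 3 ∣ ∑ i ∈ (Finset.range 5).filter (fun i => i % 3 = j), d i) :
    d 2 = 0 ∧ ¬ ∃ X : Multiset (Equiv.Perm (Fin 5)), IsPSCA 5 3 1 X := by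
  constructor
  · simp [Finset.sum_range_succ] at h1 h2
    omega
  · rintro ⟨X, hX⟩
    exact PSCAAux.no_psca hX
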